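/- Soft local time comparison of ranges: if two sequences (z_1,…,z_m) and (z̃_1,…,z̃_n) are obtained from the same Poisson process η on Σ × [0,∞) via the soft local time construction with soft local time functions G_m and G̃_n respectively, then on the event that G_m(z) ≤ G̃_n(z) for all z ∈ Σ, one has the range inclusion {z_1,…,z_m} ⊆ {z̃_1,…,z̃_n}. -/

import Mathlib

/-- Soft local time comparison of ranges: if the chains `(z_i)_{i ≤ m}` and
`(z̃_i)_{i ≤ n}` are both obtained from the same point process `η ⊆ Σ × ℝ` by the soft
local time construction — encoded by: the selected points `(z_i, v_i)` belong to `η`,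
the selected height satisfies `v_i = G_i(z_i)`, the soft local times are nondecreasing
in the time index, and every point of `η` not yet selected lies strictly above the
current soft local time graph — then `G_m ≤ G̃_n` pointwise on `Σ` implies the
range inclusion `{z_1, …, z_m} ⊆ {z̃_1, …, z̃_n}`. -/
theorem soft_local_time_range_inclusion {S : Type*} (η : Set (S × ℝ))
    (m n : ℕ) (hm : 1 ≤ m) (hn : 1 ≤ n)
    (z ztilde : ℕ → S) (v vtilde : ℕ → ℝ) (G Gt : ℕ → S → ℝ)
    (hGmono : ∀ i j : ℕ, i ≤ j → ∀ s, G i s ≤ G j s)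
    (hGtmono : ∀ i j : ℕ, i ≤ j → ∀ s, Gt i s ≤ Gt j s)
    (hmem : ∀ i, 1 ≤ i → i ≤ m → (z i, v i) ∈ η)
    (hsel : ∀ i, 1 ≤ i → i ≤ m → v i = G i (z i))
    (hmin : ∀ i, 1 ≤ i → i ≤ m → ∀ q ∈ η,
      (∀ j, 1 ≤ j → j ≤ i → q ≠ (z j, v j)) → G i q.1 < q.2)
    (htmem : ∀ i, 1 ≤ i → i ≤ n → (ztilde i, vtilde i) ∈ η)
    (htsel : ∀ i, 1 ≤ i → i ≤ n → vtilde i = Gt i (ztilde i))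
    (htmin : ∀ i, 1 ≤ i → i ≤ n → ∀ q ∈ η,
      (∀ j, 1 ≤ j → j ≤ i → q ≠ (ztilde j, vtilde j)) → Gt i q.1 < q.2)
    (hcomp : ∀ s : S, G m s ≤ Gt n s) :
    {s : S | ∃ i, 1 ≤ i ∧ i ≤ m ∧ z i = s} ⊆
      {s : S | ∃ i, 1 ≤ i ∧ i ≤ n ∧ ztilde i = s} := by
  rintro s ⟨i, hi1, him, rfl⟩
  by_contra hcon
  simp only [Set.mem_setOf_eq, not_exists, not_and] at hcon
  have hq : (z i, v i) ∈ η := hmem i hi1 him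
  have hne : ∀ j, 1 ≤ j → j ≤ n → (z i, v i) ≠ (ztilde j, vtilde j) := by
    intro j hj1 hjn heq
    exact absurd (⟨j, hj1, hjn, (congrArg Prod.fst heq).symm⟩ :
      ∃ k, 1 ≤ k ∧ k ≤ n ∧ ztilde k = z i) (by simpa using hcon)
  have hlt : Gt n (z i) < v i := htmin n hn le_rfl (z i, v i) hq hne
  have hge : v i ≤ Gt n (z i) :=
    (hsel i hi1 him).le.trans ((hGmono i m him (z i)).trans (hcomp (z i)))
  exact absurd hge (not_le.mpr hlt)
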